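/- For g = 4, m₁, m₂ > 0, n = 2(m₁+m₂), θ₀ ∈ (0, θ₄) where cos 4θ₄ = (m₂-m₁)/(m₂+m₁): the smallest T > 0 with cos 4θ₀ - 8(m₂-m₁)(T - nT²) = (1-2nT)² is T = (1/(2n))(1 - √( ((m₁+m₂)/(2m₁)) (cos 4θ₀ - (m₂-m₁)/(m₂+m₁)) )). -/

import Mathlib

open Real

/-- Blow-up time for the rank-2, `g = 4` MCF with initial angle `θ₀ ∈ (0, θ₄)`, where
`θ₄ = (1/4) arccos((m₂-m₁)/(m₂+m₁))`: the smallest `T > 0` with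
`cos 4θ₀ - 8(m₂-m₁)(T - nT²) = (1-2nT)²` is
`T = (1/(2n))(1 - √(((m₁+m₂)/(2m₁))(cos 4θ₀ - (m₂-m₁)/(m₂+m₁))))`. -/
theorem stmt_14 (m₁ m₂ : ℝ) (hm₁ : 0 < m₁) (hm₂ : 0 < m₂) (n : ℝ)
    (hn : n = 2 * (m₁ + m₂)) (θ₀ θ₄ : ℝ)
    (hθ₄ : θ₄ = 1 / 4 * Real.arccos ((m₂ - m₁) / (m₂ + m₁)))
    (hθ₀ : θ₀ ∈ Set.Ioo 0 θ₄) :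
    IsLeast {T : ℝ | 0 < T ∧
        Real.cos (4 * θ₀) - 8 * (m₂ - m₁) * (T - n * T ^ 2) = (1 - 2 * n * T) ^ 2}
      (1 / (2 * n) *
        (1 - Real.sqrt ((m₁ + m₂) / (2 * m₁) *
          (Real.cos (4 * θ₀) - (m₂ - m₁) / (m₂ + m₁))))) := by
  obtain ⟨h0, h4⟩ := hθ₀
  set d : ℝ := (m₂ - m₁) / (m₂ + m₁) with hd
  have hsum : 0 < m₂ + m₁ := by linarith
  have hdrel : d * (m₂ + m₁) = m₂ - m₁ := by
    rw [hd]; field_simp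
  have hdmem : d ∈ Set.Icc (-1 : ℝ) 1 := by
    constructor
    · rw [hd, le_div_iff₀ hsum]; linarith
    · rw [hd, div_le_one hsum]; linarith
  have hd1 : d < 1 := by rw [hd, div_lt_one hsum]; linarith
  have hc1 : Real.cos (4 * θ₀) < 1 := by
    have : 4 * θ₀ ≤ π := by
      have := Real.arccos_le_pi d
      nlinarith [h4, hθ₄]
    have := Real.cos_lt_cos_of_nonneg_of_le_pi le_rfl this (by linarith)
    simpa using this
  have hdc : d < Real.cos (4 * θ₀) := by
    have h1 : 4 * θ₀ < Real.arccos d := by nlinarith [h4, hθ₄]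
    have h2 : Real.arccos d ≤ π := Real.arccos_le_pi d
    have := Real.cos_lt_cos_of_nonneg_of_le_pi (by linarith) h2 h1
    rwa [Real.cos_arccos hdmem.1 hdmem.2] at this
  set c : ℝ := Real.cos (4 * θ₀) with hc
  set A : ℝ := (m₁ + m₂) / (2 * m₁) * (c - d) with hA
  have hApos : 0 < A := by
    apply mul_pos (div_pos (by linarith) (by linarith)) (by linarith)
  have hA1 : A < 1 := by
    rw [hA, div_mul_eq_mul_div, div_lt_one (by positivity)]
    nlinarith [hdrel]
  set s : ℝ := Real.sqrt A with hs
  have hs2 : s ^ 2 = A := Real.sq_sqrt hApos.le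
  have hA' : s ^ 2 * (2 * m₁) = (m₁ + m₂) * (c - d) := by
    rw [hs2, hA]; field_simp
  have hs0 : 0 < s := Real.sqrt_pos.mpr hApos
  have hs1 : s < 1 := by nlinarith
  have hn0 : 0 < n := by rw [hn]; linarith
  have hnne : n ≠ 0 := ne_of_gt hn0
  constructor
  · have h1s : 0 < 1 - s := by linarith
    refine ⟨by positivity, ?_⟩
    have hu : 1 - 2 * n * (1 / (2 * n) * (1 - s)) = s := by field_simp; ring
    rw [hu]
    have hX : (1 / (2 * n) * (1 - s)) - n * (1 / (2 * n) * (1 - s)) ^ 2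
        = (1 - s ^ 2) / (4 * n) := by field_simp; ring
    rw [hX, hn]
    field_simp
    linear_combination 8 * hdrel - 8 * hA'
  · rintro T ⟨hT0, hTeq⟩
    subst hn
    have key : (1 - 2 * (2 * (m₁ + m₂)) * T) ^ 2 * (2 * m₁) = s ^ 2 * (2 * m₁) := by
      linear_combination (-(m₂ + m₁)) * hTeq + hdrel - hA'
    have key2 : (1 - 2 * (2 * (m₁ + m₂)) * T) ^ 2 = s ^ 2 := by
      have h2m : (2 * m₁) ≠ 0 := by positivity
      exact mul_right_cancel₀ h2m key
    have h1 : 1 - 2 * (2 * (m₁ + m₂)) * T ≤ s := by nlinarith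
    rw [div_mul_eq_mul_div, one_mul,
      div_le_iff₀ (by positivity : (0:ℝ) < 2 * (2 * (m₁ + m₂)))]
    linarith
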